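/- Let R = ℤ[x,x⁻¹], let A be an n×n matrix with integer entries, and let M_A be the direct limit of the sequence ℤⁿ → ℤⁿ → ⋯ with all maps multiplication by Aᵀ, regarded as an R-module with x acting by the automorphism induced by Aᵀ. Then the R-linear map Rⁿ → Rⁿ given by the matrix x·Iₙ − Aᵀ is injective, and its cokernel is isomorphic to M_A as an R-module; in particular M_A admits a projective resolution of length one over R. -/

import Mathlib

/-!
STATEMENT 11: Let R = ℤ[x,x⁻¹], let A be an n×n integer matrix, and let M_A be the direct
limit of ℤⁿ → ℤⁿ → ⋯ with all maps multiplication by Aᵀ, regarded as an R-module with x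
acting by the automorphism T induced by Aᵀ. Then the R-linear map Rⁿ → Rⁿ given by the
matrix x·Iₙ − Aᵀ is injective, and its cokernel is isomorphic to M_A as an R-module
(i.e., there is an additive isomorphism intertwining the action of x with T); in particular
M_A admits a projective resolution of length one over R.
-/

noncomputable section

/-- The ℕ-indexed direct system with all terms `ℤⁿ` and all transition maps given by
multiplication by `Aᵀ`. -/
def matSystem (n : ℕ) (A : Matrix (Fin n) (Fin n) ℤ) :
    ∀ i j : ℕ, i ≤ j → (Fin n → ℤ) →ₗ[ℤ] (Fin n → ℤ) :=
  fun i j _ => ((Matrix.toLin' A.transpose : Module.End ℤ (Fin n → ℤ)) ^ (j - i) :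
    Module.End ℤ (Fin n → ℤ))

/-- The matrix `x·Iₙ − Aᵀ` over `R = ℤ[x,x⁻¹]`. -/
def charMat (n : ℕ) (A : Matrix (Fin n) (Fin n) ℤ) :
    Matrix (Fin n) (Fin n) (LaurentPolynomial ℤ) :=
  (LaurentPolynomial.T 1 : LaurentPolynomial ℤ) • (1 : Matrix (Fin n) (Fin n) (LaurentPolynomial ℤ)) -
    A.transpose.map (algebraMap ℤ (LaurentPolynomial ℤ))



lemma charMat_eq (n : ℕ) (A : Matrix (Fin n) (Fin n) ℤ) :
    charMat n A = (Matrix.charmatrix A.transpose).map (Polynomial.toLaurent (R := ℤ)) := by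
  ext i j
  by_cases h : i = j
  · subst h
    simp [charMat, Matrix.one_apply, Polynomial.toLaurent_X,
      algebraMap_int_eq, Polynomial.toLaurent_C]
  · simp [charMat, Matrix.one_apply, h, Matrix.charmatrix_apply_ne _ _ _ (Ne.symm h), Polynomial.toLaurent_C, algebraMap_int_eq]

lemma charMat_det_ne (n : ℕ) (A : Matrix (Fin n) (Fin n) ℤ) :
    (charMat n A).det ≠ 0 := by
  rw [charMat_eq]
  have : A.transpose.charmatrix.map ⇑(Polynomial.toLaurent (R := ℤ)) = (Polynomial.toLaurent (R := ℤ)).mapMatrix A.transpose.charmatrix := rfl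
  rw [this, ← RingHom.map_det]
  intro h
  exact (Matrix.charpoly_monic A.transpose).ne_zero (Polynomial.toLaurent_injective h)

lemma charMat_inj (n : ℕ) (A : Matrix (Fin n) (Fin n) ℤ) :
    Function.Injective (Matrix.toLin' (charMat n A)) := by
  rw [injective_iff_map_eq_zero]
  intro v hv
  rw [Matrix.toLin'_apply] at hv
  have h2 : (charMat n A).det • v = 0 := by
    have := congrArg ((charMat n A).adjugate.mulVec) hv
    rwa [Matrix.mulVec_mulVec, Matrix.adjugate_mul, Matrix.smul_mulVec,
      Matrix.one_mulVec, Matrix.mulVec_zero] at this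
  funext k
  have := congrFun h2 k
  simp only [Pi.smul_apply, smul_eq_mul, Pi.zero_apply] at this
  exact (mul_eq_zero.mp this).resolve_left (charMat_det_ne n A)




namespace CMAux

variable (n : ℕ) (A : Matrix (Fin n) (Fin n) ℤ)

abbrev Bm : Module.End ℤ (Fin n → ℤ) := Matrix.toLin' A.transpose

abbrev Mlim := Module.DirectLimit (fun _ : ℕ => Fin n → ℤ) (matSystem n A)

abbrev ofl (i : ℕ) : (Fin n → ℤ) →ₗ[ℤ] Mlim n A :=
  Module.DirectLimit.of ℤ ℕ (fun _ : ℕ => Fin n → ℤ) (matSystem n A) i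

lemma ofl_f {i j : ℕ} (h : i ≤ j) (x : Fin n → ℤ) :
    ofl n A j (((Bm n A) ^ (j - i)) x) = ofl n A i x :=
  Module.DirectLimit.of_f (hij := h)

def Tmap : Mlim n A →ₗ[ℤ] Mlim n A :=
  Module.DirectLimit.lift ℤ ℕ _ (matSystem n A)
    (fun i => (ofl n A i).comp (Bm n A : (Fin n → ℤ) →ₗ[ℤ] (Fin n → ℤ)))
    (by
      intro i j hij x
      show ofl n A j ((Bm n A) (((Bm n A) ^ (j - i)) x)) = ofl n A i ((Bm n A) x)
      have : (Bm n A) (((Bm n A) ^ (j - i)) x) = ((Bm n A) ^ (j - i)) ((Bm n A) x) := by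
        rw [← Module.End.mul_apply, ← pow_succ', pow_succ, Module.End.mul_apply]
      rw [this]
      exact ofl_f n A hij _)

def Smap : Mlim n A →ₗ[ℤ] Mlim n A :=
  Module.DirectLimit.lift ℤ ℕ _ (matSystem n A)
    (fun i => ofl n A (i + 1))
    (by
      intro i j hij x
      show ofl n A (j + 1) (((Bm n A) ^ (j - i)) x) = ofl n A (i + 1) x
      have h2 : (Bm n A) ^ (j - i) = (Bm n A) ^ ((j + 1) - (i + 1)) := by
        rw [Nat.succ_sub_succ]
      rw [h2]
      exact ofl_f n A (by omega) x)

@[simp] lemma Tmap_of (i : ℕ) (v : Fin n → ℤ) :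
    Tmap n A (ofl n A i v) = ofl n A i ((Bm n A) v) :=
  Module.DirectLimit.lift_of _ _ _

@[simp] lemma Smap_of (i : ℕ) (v : Fin n → ℤ) :
    Smap n A (ofl n A i v) = ofl n A (i + 1) v :=
  Module.DirectLimit.lift_of _ _ _

lemma of_B (i : ℕ) (v : Fin n → ℤ) :
    ofl n A (i + 1) ((Bm n A) v) = ofl n A i v := by
  have := ofl_f n A (Nat.le_succ i) v
  rwa [Nat.succ_sub i.le_refl, Nat.sub_self, pow_one] at this

lemma TS : (Tmap n A) * (Smap n A) = 1 := by
  apply LinearMap.ext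
  intro z
  induction z using Module.DirectLimit.induction_on with
  | ih i v =>
    show Tmap n A (Smap n A (ofl n A i v)) = ofl n A i v
    rw [Smap_of, Tmap_of, of_B]

lemma ST : (Smap n A) * (Tmap n A) = 1 := by
  apply LinearMap.ext
  intro z
  induction z using Module.DirectLimit.induction_on with
  | ih i v =>
    show Smap n A (Tmap n A (ofl n A i v)) = ofl n A i v
    rw [Tmap_of, Smap_of, of_B]

def uU : (Module.End ℤ (Mlim n A))ˣ := ⟨Tmap n A, Smap n A, TS n A, ST n A⟩

def algm : LaurentPolynomial ℤ →ₐ[ℤ] Module.End ℤ (Mlim n A) :=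
  (AddMonoidAlgebra.lift ℤ _ ℤ) ((Units.coeHom _).comp (zpowersHom (Module.End ℤ (Mlim n A))ˣ (uU n A)))

lemma algm_T (m : ℤ) : algm n A (LaurentPolynomial.T m) = ((uU n A ^ m : _ˣ) : Module.End ℤ (Mlim n A)) := by
  rw [LaurentPolynomial.T, algm, AddMonoidAlgebra.lift_single]
  simp

lemma algm_T1 : algm n A (LaurentPolynomial.T 1) = Tmap n A := by
  rw [algm_T, zpow_one]; rfl


def iotam : (Fin n → ℤ) →ₗ[ℤ] (Fin n → LaurentPolynomial ℤ) :=
  LinearMap.pi (fun k => (Algebra.linearMap ℤ (LaurentPolynomial ℤ)).comp (LinearMap.proj k))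

@[simp] lemma iotam_apply (v : Fin n → ℤ) (k : Fin n) :
    iotam n v k = algebraMap ℤ (LaurentPolynomial ℤ) (v k) := rfl

lemma iotam_single (j : Fin n) (z : ℤ) :
    iotam n (Pi.single j z) = Pi.single j (algebraMap ℤ (LaurentPolynomial ℤ) z) := by
  funext k
  by_cases h : k = j
  · subst h; simp
  · simp [Pi.single_apply, h]

def chi : (Fin n → LaurentPolynomial ℤ) →ₗ[ℤ] Mlim n A :=
  ∑ j : Fin n, (LinearMap.applyₗ (ofl n A 0 (Pi.single j 1))).comp
    ((algm n A).toLinearMap.comp (LinearMap.proj j))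

lemma chi_apply (p : Fin n → LaurentPolynomial ℤ) :
    chi n A p = ∑ j : Fin n, algm n A (p j) (ofl n A 0 (Pi.single j 1)) := by
  simp [chi]

lemma chi_single (j : Fin n) (r : LaurentPolynomial ℤ) :
    chi n A (Pi.single j r) = algm n A r (ofl n A 0 (Pi.single j 1)) := by
  rw [chi_apply, Finset.sum_eq_single j]
  · simp
  · intro k _ hk
    rw [Pi.single_eq_of_ne hk]
    simp
  · simp

lemma chi_smul (q : LaurentPolynomial ℤ) (p : Fin n → LaurentPolynomial ℤ) :
    chi n A (q • p) = algm n A q (chi n A p) := by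
  rw [chi_apply, chi_apply, map_sum]
  refine Finset.sum_congr rfl fun j _ => ?_
  rw [Pi.smul_apply, smul_eq_mul, map_mul]
  rfl

lemma algm_intCast (z : ℤ) :
    algm n A (algebraMap ℤ (LaurentPolynomial ℤ) z) = z • (1 : Module.End ℤ (Mlim n A)) := by
  rw [AlgHom.commutes, Algebra.algebraMap_eq_smul_one]

lemma single_zsmul (j : Fin n) (z : ℤ) :
    z • (Pi.single j 1 : Fin n → ℤ) = Pi.single j z := by
  funext k
  by_cases h : k = j
  · subst h; simp
  · simp [Pi.single_eq_of_ne h]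

lemma chi_iota (v : Fin n → ℤ) : chi n A (iotam n v) = ofl n A 0 v := by
  rw [chi_apply]
  have h1 : ∀ j : Fin n, algm n A (iotam n v j) (ofl n A 0 (Pi.single j 1)) =
      ofl n A 0 (Pi.single j (v j)) := by
    intro j
    rw [iotam_apply, algm_intCast, LinearMap.smul_apply, Module.End.one_apply, ← map_zsmul,
      single_zsmul]
  rw [Finset.sum_congr rfl (fun j _ => h1 j), ← map_sum]
  congr 1
  exact Finset.univ_sum_single v

-- commuting of `Tmap` with `algm q`
lemma Tmap_algm (q : LaurentPolynomial ℤ) (z : Mlim n A) :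
    Tmap n A (algm n A q z) = algm n A q (Tmap n A z) := by
  have h := congrArg (algm n A) (mul_comm (LaurentPolynomial.T 1) q)
  rw [map_mul, map_mul, algm_T1] at h
  exact congrFun (congrArg DFunLike.coe h) z

lemma chi_T1_smul (p : Fin n → LaurentPolynomial ℤ) :
    chi n A ((LaurentPolynomial.T 1 : LaurentPolynomial ℤ) • p) = Tmap n A (chi n A p) := by
  rw [chi_smul, algm_T1]

lemma Bm_single (k : Fin n) :
    (Bm n A) (Pi.single k 1) = fun j => A.transpose j k := by
  funext j
  simp [Bm, Matrix.toLin'_apply, Matrix.mulVec_single]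

lemma chi_mulVecMap (p : Fin n → LaurentPolynomial ℤ) :
    chi n A ((A.transpose.map (algebraMap ℤ (LaurentPolynomial ℤ))).mulVec p)
      = Tmap n A (chi n A p) := by
  rw [chi_apply]
  have lhs : ∀ j : Fin n,
      algm n A (((A.transpose.map (algebraMap ℤ (LaurentPolynomial ℤ))).mulVec p) j)
        (ofl n A 0 (Pi.single j 1))
      = ∑ k : Fin n, (A.transpose j k) • (algm n A (p k) (ofl n A 0 (Pi.single j 1))) := by
    intro j
    rw [Matrix.mulVec, dotProduct]
    rw [map_sum, LinearMap.sum_apply]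
    refine Finset.sum_congr rfl fun k _ => ?_
    rw [Matrix.map_apply, map_mul, algm_intCast, Module.End.mul_apply, LinearMap.smul_apply,
      Module.End.one_apply]
  rw [Finset.sum_congr rfl (fun j _ => lhs j), Finset.sum_comm]
  have rhs : Tmap n A (chi n A p)
      = ∑ k : Fin n, algm n A (p k) (ofl n A 0 ((Bm n A) (Pi.single k 1))) := by
    rw [chi_apply, map_sum]
    refine Finset.sum_congr rfl fun k _ => ?_
    rw [Tmap_algm, Tmap_of]
  rw [rhs]
  refine Finset.sum_congr rfl fun k _ => ?_
  have h2 : ∀ j : Fin n, A.transpose j k • (algm n A (p k)) (ofl n A 0 (Pi.single j 1))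
      = algm n A (p k) (ofl n A 0 (A.transpose j k • Pi.single j 1)) := by
    intro j; rw [map_zsmul, map_zsmul]
  rw [Finset.sum_congr rfl (fun j _ => h2 j), ← map_sum, ← map_sum]
  congr 2
  rw [Bm_single]
  funext m
  simp [single_zsmul, Pi.single_apply, Finset.sum_apply]

lemma toLin'_charMat_apply (p : Fin n → LaurentPolynomial ℤ) :
    Matrix.toLin' (charMat n A) p =
      (LaurentPolynomial.T 1 : LaurentPolynomial ℤ) • p -
        (A.transpose.map (algebraMap ℤ (LaurentPolynomial ℤ))).mulVec p := by
  rw [Matrix.toLin'_apply, charMat, Matrix.sub_mulVec, Matrix.smul_mulVec,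
    Matrix.one_mulVec]

lemma chi_charMat (p : Fin n → LaurentPolynomial ℤ) :
    chi n A (Matrix.toLin' (charMat n A) p) = 0 := by
  rw [toLin'_charMat_apply, map_sub, chi_T1_smul, chi_mulVecMap, sub_self]

abbrev rng : Submodule (LaurentPolynomial ℤ) (Fin n → LaurentPolynomial ℤ) :=
  LinearMap.range (Matrix.toLin' (charMat n A))

abbrev Cok := (Fin n → LaurentPolynomial ℤ) ⧸ rng n A

lemma chi_ker : (rng n A).restrictScalars ℤ ≤ LinearMap.ker (chi n A) := by
  rintro x ⟨p, rfl⟩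
  exact chi_charMat n A p

def psi0 : Cok n A →ₗ[ℤ] Mlim n A :=
  (Submodule.liftQ ((rng n A).restrictScalars ℤ) (chi n A) (chi_ker n A)).comp
    ((Submodule.Quotient.restrictScalarsEquiv ℤ (rng n A)).symm :
      Cok n A →ₗ[ℤ] ((Fin n → LaurentPolynomial ℤ) ⧸ (rng n A).restrictScalars ℤ))

lemma psi0_mk (p : Fin n → LaurentPolynomial ℤ) :
    psi0 n A (Submodule.Quotient.mk p) = chi n A p := by
  simp [psi0, Submodule.Quotient.restrictScalarsEquiv_symm_mk]

def gmap (i : ℕ) : (Fin n → ℤ) →ₗ[ℤ] Cok n A :=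
  ((((rng n A).mkQ).comp
      ((LinearMap.lsmul (LaurentPolynomial ℤ) (Fin n → LaurentPolynomial ℤ))
        (LaurentPolynomial.T (-(i : ℤ))))).restrictScalars ℤ).comp (iotam n)

lemma gmap_apply (i : ℕ) (v : Fin n → ℤ) :
    gmap n A i v = Submodule.Quotient.mk
      ((LaurentPolynomial.T (-(i : ℤ)) : LaurentPolynomial ℤ) • iotam n v) := rfl

lemma iota_mulVec (v : Fin n → ℤ) :
    (A.transpose.map (algebraMap ℤ (LaurentPolynomial ℤ))).mulVec (iotam n v)
      = iotam n ((Bm n A) v) := by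
  funext j
  simp [Matrix.mulVec, dotProduct, Bm, Matrix.toLin'_apply, ← map_mul, ← map_sum]

lemma mk_iota_B (v : Fin n → ℤ) :
    (Submodule.Quotient.mk (iotam n ((Bm n A) v)) : Cok n A)
      = (LaurentPolynomial.T 1 : LaurentPolynomial ℤ) • Submodule.Quotient.mk (iotam n v) := by
  rw [← Submodule.Quotient.mk_smul]
  rw [Submodule.Quotient.eq]
  refine ⟨-(iotam n v), ?_⟩
  rw [map_neg, toLin'_charMat_apply, iota_mulVec, neg_sub]

lemma mk_iota_Bpow (k : ℕ) (v : Fin n → ℤ) :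
    (Submodule.Quotient.mk (iotam n (((Bm n A) ^ k) v)) : Cok n A)
      = (LaurentPolynomial.T (k : ℤ) : LaurentPolynomial ℤ) • Submodule.Quotient.mk (iotam n v) := by
  induction k with
  | zero => simp [LaurentPolynomial.T_zero]
  | succ k ih =>
    have h : ((Bm n A) ^ (k + 1)) v = (Bm n A) (((Bm n A) ^ k) v) := by
      rw [pow_succ', Module.End.mul_apply]
    rw [h, mk_iota_B, ih, smul_smul, ← LaurentPolynomial.T_add]
    congr 2
    push_cast
    ring

def Lmap : Mlim n A →ₗ[ℤ] Cok n A :=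
  Module.DirectLimit.lift ℤ ℕ _ (matSystem n A) (gmap n A) (by
    intro i j hij v
    show gmap n A j (((Bm n A) ^ (j - i)) v) = gmap n A i v
    rw [gmap_apply, gmap_apply, Submodule.Quotient.mk_smul, Submodule.Quotient.mk_smul,
      mk_iota_Bpow, smul_smul, ← LaurentPolynomial.T_add]
    congr 2
    omega)

lemma Lmap_of (i : ℕ) (v : Fin n → ℤ) :
    Lmap n A (ofl n A i v) = Submodule.Quotient.mk
      ((LaurentPolynomial.T (-(i : ℤ)) : LaurentPolynomial ℤ) • iotam n v) :=
  Module.DirectLimit.lift_of _ _ _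

lemma Lmap_Tmap (z : Mlim n A) :
    Lmap n A (Tmap n A z) = (LaurentPolynomial.T 1 : LaurentPolynomial ℤ) • Lmap n A z := by
  induction z using Module.DirectLimit.induction_on with
  | ih i v =>
    show Lmap n A (Tmap n A (ofl n A i v)) = (LaurentPolynomial.T 1 : LaurentPolynomial ℤ) • Lmap n A (ofl n A i v)
    rw [Tmap_of, Lmap_of, Lmap_of]
    have h : iotam n ((Bm n A) v) = iotam n (((Bm n A) ^ 1) v) := by rw [pow_one]
    rw [Submodule.Quotient.mk_smul, Submodule.Quotient.mk_smul, h, mk_iota_Bpow,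
      smul_smul, smul_smul, ← LaurentPolynomial.T_add, ← LaurentPolynomial.T_add]
    congr 2
    ring

lemma Lmap_Smap (z : Mlim n A) :
    Lmap n A (Smap n A z) = (LaurentPolynomial.T (-1) : LaurentPolynomial ℤ) • Lmap n A z := by
  induction z using Module.DirectLimit.induction_on with
  | ih i v =>
    show Lmap n A (Smap n A (ofl n A i v)) = (LaurentPolynomial.T (-1) : LaurentPolynomial ℤ) • Lmap n A (ofl n A i v)
    rw [Smap_of, Lmap_of, Lmap_of, Submodule.Quotient.mk_smul, Submodule.Quotient.mk_smul,
      smul_smul, ← LaurentPolynomial.T_add]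
    congr 2
    push_cast
    ring

lemma Lmap_upow (m : ℤ) : ∀ z : Mlim n A,
    Lmap n A (((uU n A ^ m :) : Module.End ℤ (Mlim n A)) z)
      = (LaurentPolynomial.T m : LaurentPolynomial ℤ) • Lmap n A z := by
  induction m using Int.induction_on with
  | zero => intro z; simp [LaurentPolynomial.T_zero]
  | succ k ih =>
    intro z
    rw [zpow_add_one, Units.val_mul, Module.End.mul_apply]
    have hu : ((uU n A : Module.End ℤ (Mlim n A))) z = Tmap n A z := rfl
    rw [hu, ih (Tmap n A z), Lmap_Tmap, smul_smul, ← LaurentPolynomial.T_add]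
  | pred k ih =>
    intro z
    rw [zpow_sub_one, Units.val_mul, Module.End.mul_apply]
    have hs : (((uU n A)⁻¹ : _ˣ) : Module.End ℤ (Mlim n A)) z = Smap n A z := rfl
    rw [hs, ih (Smap n A z), Lmap_Smap, smul_smul, ← LaurentPolynomial.T_add]
    congr 1

lemma Smap_pow_of (i : ℕ) : ∀ (j : ℕ) (v : Fin n → ℤ),
    ((Smap n A) ^ i) (ofl n A j v) = ofl n A (j + i) v := by
  induction i with
  | zero => intro j v; rfl
  | succ i ih =>
    intro j v
    have e : j + (i + 1) = (j + 1) + i := by omega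
    rw [pow_succ, Module.End.mul_apply, Smap_of, ih (j + 1) v, e]

lemma upow_neg_of (i : ℕ) (v : Fin n → ℤ) :
    ((uU n A ^ (-(i : ℤ)) :) : Module.End ℤ (Mlim n A)) (ofl n A 0 v) = ofl n A i v := by
  have h1 : uU n A ^ (-(i : ℤ)) = (uU n A)⁻¹ ^ i := by
    rw [zpow_neg, zpow_natCast, inv_pow]
  rw [h1, Units.val_pow_eq_pow_val]
  have h2 : (((uU n A)⁻¹ : _ˣ) : Module.End ℤ (Mlim n A)) = Smap n A := rfl
  rw [h2, Smap_pow_of, Nat.zero_add]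

lemma psi0_Lmap (z : Mlim n A) : psi0 n A (Lmap n A z) = z := by
  induction z using Module.DirectLimit.induction_on with
  | ih i v =>
    show psi0 n A (Lmap n A (ofl n A i v)) = ofl n A i v
    rw [Lmap_of, psi0_mk, chi_smul, chi_iota, algm_T, upow_neg_of]

lemma Lmap_chi_single (j : Fin n) (r : LaurentPolynomial ℤ) :
    Lmap n A (chi n A (Pi.single j r))
      = (Submodule.Quotient.mk (Pi.single j r) : Cok n A) := by
  induction r using LaurentPolynomial.induction_on' with
  | add p q hp hq =>
    have h : (Pi.single j (p + q) : Fin n → LaurentPolynomial ℤ)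
        = Pi.single j p + Pi.single j q := by
      rw [Pi.single_add]
    rw [h, map_add, map_add, hp, hq, ← Submodule.Quotient.mk_add]
  | C_mul_T m a =>
    have hCa : (LaurentPolynomial.C a * LaurentPolynomial.T m : LaurentPolynomial ℤ)
        = a • LaurentPolynomial.T m := by
      rw [eq_intCast (LaurentPolynomial.C : ℤ →+* LaurentPolynomial ℤ) a, ← zsmul_eq_mul]
    rw [chi_single, hCa, map_zsmul, algm_T, LinearMap.smul_apply, map_zsmul, Lmap_upow]
    have h0 : Lmap n A (ofl n A 0 (Pi.single j 1))
        = Submodule.Quotient.mk (iotam n (Pi.single j 1)) := by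
      rw [Lmap_of]
      norm_num [LaurentPolynomial.T_zero]
    rw [h0, iotam_single, map_one, ← Submodule.Quotient.mk_smul, ← Submodule.Quotient.mk_smul]
    congr 1
    funext k
    by_cases h : k = j
    · subst h
      simp [smul_eq_mul, mul_comm]
    · simp [Pi.single_eq_of_ne h]

lemma Lmap_chi (p : Fin n → LaurentPolynomial ℤ) :
    Lmap n A (chi n A p) = (Submodule.Quotient.mk p : Cok n A) := by
  have hp : p = ∑ j : Fin n, Pi.single j (p j) := (Finset.univ_sum_single p).symm
  rw [hp, map_sum, map_sum, Finset.sum_congr rfl (fun j _ => Lmap_chi_single n A j (p j))]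
  have : ∀ q : Fin n → LaurentPolynomial ℤ,
      (Submodule.Quotient.mk q : Cok n A) = (rng n A).mkQ q := fun _ => rfl
  simp_rw [this]
  rw [← map_sum]

def psiEquiv : Cok n A ≃ₗ[ℤ] Mlim n A :=
  LinearEquiv.ofLinear (psi0 n A) (Lmap n A)
    (LinearMap.ext fun z => psi0_Lmap n A z)
    (LinearMap.ext fun c => by
      obtain ⟨p, rfl⟩ := Submodule.Quotient.mk_surjective _ c
      show Lmap n A (psi0 n A (Submodule.Quotient.mk p)) = Submodule.Quotient.mk p
      rw [psi0_mk, Lmap_chi])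

lemma psiEquiv_mk (p : Fin n → LaurentPolynomial ℤ) :
    psiEquiv n A (Submodule.Quotient.mk p) = chi n A p := psi0_mk n A p

lemma Tmap_bijective : Function.Bijective (Tmap n A) := by
  have : Tmap n A = ((uU n A : Module.End ℤ (Mlim n A)) : Mlim n A →ₗ[ℤ] Mlim n A) := rfl
  rw [this]
  exact (Module.End.isUnit_iff _).mp (uU n A).isUnit

lemma intertwine (c : Cok n A) :
    psiEquiv n A ((LaurentPolynomial.T 1 : LaurentPolynomial ℤ) • c)
      = Tmap n A (psiEquiv n A c) := by
  obtain ⟨p, rfl⟩ := Submodule.Quotient.mk_surjective _ c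
  rw [← Submodule.Quotient.mk_smul, psiEquiv_mk, psiEquiv_mk, chi_T1_smul]

end CMAux

theorem charMat_injective_and_cokernel_iso_directLimit
    (n : ℕ) (A : Matrix (Fin n) (Fin n) ℤ) :
    Function.Injective (Matrix.toLin' (charMat n A)) ∧
    ∃ (T : Module.DirectLimit (fun _ : ℕ => Fin n → ℤ) (matSystem n A) →ₗ[ℤ]
          Module.DirectLimit (fun _ : ℕ => Fin n → ℤ) (matSystem n A))
      (ψ : ((Fin n → LaurentPolynomial ℤ) ⧸
          LinearMap.range (Matrix.toLin' (charMat n A))) ≃ₗ[ℤ]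
        Module.DirectLimit (fun _ : ℕ => Fin n → ℤ) (matSystem n A)),
      -- `T` is the endomorphism induced by `Aᵀ`, and it is an automorphism:
      (∀ (i : ℕ) (v : Fin n → ℤ),
        T (Module.DirectLimit.of ℤ ℕ (fun _ : ℕ => Fin n → ℤ) (matSystem n A) i v) =
          Module.DirectLimit.of ℤ ℕ (fun _ : ℕ => Fin n → ℤ) (matSystem n A) i
            (Matrix.toLin' A.transpose v)) ∧
      Function.Bijective T ∧
      -- `ψ` intertwines the action of `x` on the cokernel with `T`, so that it is an
      -- isomorphism of `R`-modules onto `M_A` with `x` acting by `T`: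
      (∀ c : (Fin n → LaurentPolynomial ℤ) ⧸
          LinearMap.range (Matrix.toLin' (charMat n A)),
        ψ ((LaurentPolynomial.T 1 : LaurentPolynomial ℤ) • c) = T (ψ c)) := by
  refine ⟨charMat_inj n A, CMAux.Tmap n A, CMAux.psiEquiv n A, ?_, CMAux.Tmap_bijective n A, ?_⟩
  · intro i v
    exact CMAux.Tmap_of n A i v
  · intro c
    exact CMAux.intertwine n A c

end
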